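/- If a discrete random variable M on the integers satisfies P(M < m) < Φ(G(m)) < P(M ≤ m) for all integers m in its support (the intersection property), then the second-order statistic 2D comparison follows: P(G(M)² > s) differs from the χ²(1)-tail P(Z² > s) by at most the maximal step probability, i.e., |P(G(M) ≤ w) - Φ(w)| ≤ max_m P(M = m) for all w. -/

import Mathlib

open MeasureTheory

lemma phi_integrable : Integrable (fun z : ℝ => Real.exp (-z ^ 2 / 2) / Real.sqrt (2 * Real.pi)) := by
  have h : (fun z : ℝ => Real.exp (-z ^ 2 / 2) / Real.sqrt (2 * Real.pi))
      = fun z => Real.exp (-(1/2) * z ^ 2) * (Real.sqrt (2 * Real.pi))⁻¹ := by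
    funext z; rw [div_eq_mul_inv]; ring_nf
  rw [h]
  exact (integrable_exp_neg_mul_sq (by norm_num)).mul_const _

lemma phi_nonneg' (z : ℝ) : 0 ≤ Real.exp (-z ^ 2 / 2) / Real.sqrt (2 * Real.pi) :=
  div_nonneg (Real.exp_nonneg _) (Real.sqrt_nonneg _)

lemma phi_mono : Monotone (fun w => ∫ z in Set.Iic w, Real.exp (-z ^ 2 / 2) / Real.sqrt (2 * Real.pi)) := by
  intro a b hab
  exact setIntegral_mono_set phi_integrable.integrableOn
    (Filter.Eventually.of_forall phi_nonneg') (HasSubset.Subset.eventuallyLE (Set.Iic_subset_Iic.2 hab))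

lemma phi_nonneg (w : ℝ) : 0 ≤ ∫ z in Set.Iic w, Real.exp (-z ^ 2 / 2) / Real.sqrt (2 * Real.pi) :=
  setIntegral_nonneg measurableSet_Iic fun z _ => phi_nonneg' z

lemma phi_total : (∫ z : ℝ, Real.exp (-z ^ 2 / 2) / Real.sqrt (2 * Real.pi)) = 1 := by
  have h : (fun z : ℝ => Real.exp (-z ^ 2 / 2) / Real.sqrt (2 * Real.pi))
      = fun z => Real.exp (-(1/2) * z ^ 2) * (Real.sqrt (2 * Real.pi))⁻¹ := by
    funext z; rw [div_eq_mul_inv]; ring_nf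
  rw [h, MeasureTheory.integral_mul_const, integral_gaussian]
  rw [show (Real.pi / (1/2)) = 2 * Real.pi by ring]
  exact mul_inv_cancel₀ (by positivity)

lemma phi_le_one (w : ℝ) : (∫ z in Set.Iic w, Real.exp (-z ^ 2 / 2) / Real.sqrt (2 * Real.pi)) ≤ 1 := by
  rw [← phi_total]
  exact setIntegral_le_integral phi_integrable (Filter.Eventually.of_forall phi_nonneg')

/-- If an integer-valued random variable `M` satisfies the intersection property
`P(M < m) < Φ(G(m)) < P(M ≤ m)` for all `m` in its support, then the CDF of `G(M)` differs
from the standard Gaussian CDF `Φ` by at most the maximal step probability: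
`|P(G(M) ≤ w) - Φ(w)| ≤ sup_m P(M = m)` for all `w`. -/
theorem intersection_implies_cdf_close {Ω : Type*} [MeasurableSpace Ω]
    (P : Measure Ω) [IsProbabilityMeasure P] (M : Ω → ℤ) (hM : Measurable M)
    (G : ℤ → ℝ) (hG : StrictMono G)
    (Φ : ℝ → ℝ)
    (hΦ : Φ = fun w => ∫ z in Set.Iic w, Real.exp (-z ^ 2 / 2) / Real.sqrt (2 * Real.pi))
    (hint : ∀ m : ℤ, 0 < (P {ω | M ω = m}).toReal →
      (P {ω | M ω < m}).toReal < Φ (G m) ∧ Φ (G m) < (P {ω | M ω ≤ m}).toReal) :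
    ∀ w : ℝ, |(P {ω | G (M ω) ≤ w}).toReal - Φ w|
      ≤ ⨆ m : ℤ, (P {ω | M ω = m}).toReal := by
  -- abbreviations
  have hΦmono : Monotone Φ := by rw [hΦ]; exact phi_mono
  have hΦ0 : ∀ x, 0 ≤ Φ x := by rw [hΦ]; exact phi_nonneg
  have hΦ1 : ∀ x, Φ x ≤ 1 := by rw [hΦ]; exact phi_le_one
  set p : ℤ → ℝ := fun m => (P {ω | M ω = m}).toReal with hpdef
  set F : ℤ → ℝ := fun m => (P {ω | M ω ≤ m}).toReal with hFdef
  set Fl : ℤ → ℝ := fun m => (P {ω | M ω < m}).toReal with hFldef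
  have hintp : ∀ m : ℤ, 0 < p m → Fl m < Φ (G m) ∧ Φ (G m) < F m := hint
  set c : ℝ := ⨆ m : ℤ, p m with hcdef
  have hbdd : BddAbove (Set.range p) := by
    refine ⟨1, ?_⟩
    rintro x ⟨m, rfl⟩
    calc (P {ω | M ω = m}).toReal ≤ (1 : ENNReal).toReal :=
          ENNReal.toReal_mono ENNReal.one_ne_top prob_le_one
      _ = 1 := ENNReal.toReal_one
  have hpc : ∀ m, p m ≤ c := fun m => le_ciSup hbdd m
  have hp0 : ∀ m, 0 ≤ p m := fun m => ENNReal.toReal_nonneg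
  have hc0 : 0 ≤ c := le_trans (hp0 0) (hpc 0)
  -- measurability
  have hme : ∀ m : ℤ, MeasurableSet {ω | M ω = m} := fun m => hM (measurableSet_singleton m)
  have hmle : ∀ m : ℤ, MeasurableSet {ω | M ω ≤ m} := fun m => hM measurableSet_Iic
  have hmlt : ∀ m : ℤ, MeasurableSet {ω | M ω < m} := fun m => hM measurableSet_Iio
  -- F m = Fl m + p m
  have h1 : ∀ m : ℤ, F m = Fl m + p m := by
    intro m
    have hs : {ω | M ω ≤ m} = {ω | M ω < m} ∪ {ω | M ω = m} := by
      ext ω; simp [le_iff_lt_or_eq]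
    have hd : Disjoint {ω | M ω < m} {ω | M ω = m} := by
      rw [Set.disjoint_left]; intro ω h1 h2; simp only [Set.mem_setOf_eq] at *; omega
    simp only [hFdef, hFldef, hpdef, hs, measure_union hd (hme m),
      ENNReal.toReal_add (measure_ne_top P _) (measure_ne_top P _)]
  -- Fl (m+1) = F m
  have h2 : ∀ m : ℤ, Fl (m + 1) = F m := by
    intro m
    have : {ω | M ω < m + 1} = {ω | M ω ≤ m} := by ext ω; simp [Int.lt_add_one_iff]
    simp only [hFldef, hFdef, this]
  -- p m = 0 → P {M = m} = 0
  have hp0' : ∀ m : ℤ, p m = 0 → P {ω | M ω = m} = 0 := by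
    intro m hm
    rcases (ENNReal.toReal_eq_zero_iff _).mp hm with h | h
    · exact h
    · exact absurd h (measure_ne_top P _)
  -- key A : F m = F j if no mass in (j, m]
  have keyA : ∀ j m : ℤ, j ≤ m → (∀ i, j < i → i ≤ m → p i = 0) → F m = F j := by
    intro j
    refine Int.le_induction (motive := fun n _ => (∀ i, j < i → i ≤ n → p i = 0) → F n = F j) ?_ ?_
    · intro _; rfl
    · intro n hn ih h
      rw [h1 (n+1), h2 n, h (n+1) (by omega) le_rfl, add_zero]
      exact ih fun i hi him => h i hi (by omega)
  -- key B : Fl j = Fl m if no mass in [m, j)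
  have keyB : ∀ m j : ℤ, m ≤ j → (∀ i, m ≤ i → i < j → p i = 0) → Fl j = Fl m := by
    intro m
    refine Int.le_induction (motive := fun n _ => (∀ i, m ≤ i → i < n → p i = 0) → Fl n = Fl m) ?_ ?_
    · intro _; rfl
    · intro n hn ih h
      rw [h2 n, h1 n, h n (by omega) (by omega), add_zero]
      exact ih fun i hi hin => h i hi (by omega)
  -- zero lemma
  have hzero : ∀ m : ℤ, (∀ i, i ≤ m → p i = 0) → F m = 0 := by
    intro m h
    have hU : P (⋃ j : ℤ, {ω | M ω = j ∧ j ≤ m}) = 0 := by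
      refine measure_iUnion_null fun j => ?_
      by_cases hj : j ≤ m
      · exact measure_mono_null (fun ω hω => hω.1) (hp0' j (h j hj))
      · convert measure_empty (μ := P)
        ext ω; simp only [Set.mem_setOf_eq, Set.mem_empty_iff_false, iff_false]
        rintro ⟨-, hx⟩; exact hj hx
    have hsub : {ω | M ω ≤ m} ⊆ ⋃ j : ℤ, {ω | M ω = j ∧ j ≤ m} := by
      intro ω hω
      simp only [Set.mem_iUnion, Set.mem_setOf_eq]
      exact ⟨M ω, rfl, hω⟩
    have : P {ω | M ω ≤ m} = 0 := measure_mono_null hsub hU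
    show (P {ω | M ω ≤ m}).toReal = 0
    rw [this, ENNReal.toReal_zero]
  -- one lemma
  have hone : ∀ m : ℤ, (∀ i, m ≤ i → p i = 0) → Fl m = 1 := by
    intro m h
    have hU : P (⋃ j : ℤ, {ω | M ω = j ∧ m ≤ j}) = 0 := by
      refine measure_iUnion_null fun j => ?_
      by_cases hj : m ≤ j
      · exact measure_mono_null (fun ω hω => hω.1) (hp0' j (h j hj))
      · convert measure_empty (μ := P)
        ext ω; simp only [Set.mem_setOf_eq, Set.mem_empty_iff_false, iff_false]
        rintro ⟨-, hx⟩; exact hj hx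
    have hsub : {ω | m ≤ M ω} ⊆ ⋃ j : ℤ, {ω | M ω = j ∧ m ≤ j} := by
      intro ω hω
      simp only [Set.mem_iUnion, Set.mem_setOf_eq]
      exact ⟨M ω, rfl, hω⟩
    have hnull : P {ω | m ≤ M ω} = 0 := measure_mono_null hsub hU
    have hcompl : {ω | M ω < m} = {ω | m ≤ M ω}ᶜ := by ext ω; simp [not_le]
    have hmeas : MeasurableSet {ω | m ≤ M ω} := hM measurableSet_Ici
    show (P {ω | M ω < m}).toReal = 1
    rw [hcompl, measure_compl hmeas (measure_ne_top P _), hnull, measure_univ,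
      tsub_zero, ENNReal.toReal_one]
  -- Claim A : F m - Φ (G m) ≤ c
  have claimA : ∀ m : ℤ, F m - Φ (G m) ≤ c := by
    intro m
    by_cases hT : ∃ j, j ≤ m ∧ 0 < p j
    · obtain ⟨j, ⟨hjm, hjpos⟩, hmax⟩ :=
        Int.exists_greatest_of_bdd (P := fun j => j ≤ m ∧ 0 < p j) ⟨m, fun z hz => hz.1⟩ hT
      have hFm : F m = F j := keyA j m hjm fun i hij him => by
        by_contra h
        have : 0 < p i := lt_of_le_of_ne (hp0 i) (Ne.symm h)
        have := hmax i ⟨him, this⟩; omega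
      have := (hintp j hjpos).1
      have hFj : F j < Φ (G j) + p j := by rw [h1 j]; linarith
      calc F m - Φ (G m) ≤ F j - Φ (G j) := by
            rw [hFm]; have := hΦmono (hG.monotone hjm); linarith
        _ ≤ p j := by linarith
        _ ≤ c := hpc j
    · push_neg at hT
      have : F m = 0 := hzero m fun i him => le_antisymm (hT i him) (hp0 i)
      rw [this]
      have := hΦ0 (G m); linarith
  -- Claim B : Φ (G m) - Fl m ≤ c
  have claimB : ∀ m : ℤ, Φ (G m) - Fl m ≤ c := by
    intro m
    by_cases hT : ∃ j, m ≤ j ∧ 0 < p j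
    · obtain ⟨j, ⟨hmj, hjpos⟩, hmin⟩ :=
        Int.exists_least_of_bdd (P := fun j => m ≤ j ∧ 0 < p j) ⟨m, fun z hz => hz.1⟩ hT
      have hFlm : Fl j = Fl m := keyB m j hmj fun i hmi hij => by
        by_contra h
        have : 0 < p i := lt_of_le_of_ne (hp0 i) (Ne.symm h)
        have := hmin i ⟨hmi, this⟩; omega
      have := (hintp j hjpos).2
      have hFj : Φ (G j) < Fl j + p j := by rw [h1 j] at this; linarith
      calc Φ (G m) - Fl m ≤ Φ (G j) - Fl j := by
            rw [← hFlm]; have := hΦmono (hG.monotone hmj); linarith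
        _ ≤ p j := by linarith
        _ ≤ c := hpc j
    · push_neg at hT
      have : Fl m = 1 := hone m fun i hmi => le_antisymm (hT i hmi) (hp0 i)
      rw [this]
      have := hΦ1 (G m); linarith
  -- main case split
  intro w
  rw [abs_le]
  by_cases hS : ∃ m : ℤ, G m ≤ w
  · by_cases hSb : ∃ m : ℤ, w < G m
    · -- greatest m₀ with G m₀ ≤ w
      obtain ⟨b, hb⟩ := hSb
      obtain ⟨m₀, hm₀, hmax⟩ := Int.exists_greatest_of_bdd (P := fun z => G z ≤ w)
        ⟨b, fun z hz => by
          by_contra h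
          exact absurd (le_trans (hG.monotone (by omega : b ≤ z)) hz) (not_le.2 hb)⟩ hS
      have hw1 : w < G (m₀ + 1) := by
        by_contra h
        have := hmax (m₀ + 1) (not_lt.1 h); omega
      have hev : {ω | G (M ω) ≤ w} = {ω | M ω ≤ m₀} := by
        ext ω; simp only [Set.mem_setOf_eq]
        constructor
        · intro h; exact hmax (M ω) h
        · intro h; exact le_trans (hG.monotone h) hm₀
      have : (P {ω | G (M ω) ≤ w}).toReal = F m₀ := by rw [hev]
      rw [this]
      constructor
      · -- Φ w - F m₀ ≤ c
        have h4 := claimB (m₀ + 1)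
        have := hΦmono (le_of_lt hw1)
        rw [h2 m₀] at h4
        linarith
      · have h3 := claimA m₀
        have := hΦmono hm₀
        linarith
    · -- all G m ≤ w : event is univ
      push_neg at hSb
      have hev : {ω | G (M ω) ≤ w} = Set.univ := by
        ext ω; simp only [Set.mem_setOf_eq, Set.mem_univ, iff_true]; exact hSb (M ω)
      rw [hev, measure_univ, ENNReal.toReal_one]
      constructor
      · have := hΦ1 w; linarith
      · -- 1 - Φ w ≤ c
        have hlim : Filter.Tendsto (fun n : ℕ => F (n : ℤ)) Filter.atTop (nhds 1) := by
          have hmono : Monotone fun n : ℕ => {ω | M ω ≤ (n : ℤ)} := by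
            intro a b hab ω hω
            simp only [Set.mem_setOf_eq] at hω ⊢
            exact le_trans hω (by exact_mod_cast hab)
          have h := tendsto_measure_iUnion_atTop (μ := P) hmono
          have huniv : (⋃ n : ℕ, {ω | M ω ≤ (n : ℤ)}) = Set.univ := by
            ext ω; simp only [Set.mem_iUnion, Set.mem_setOf_eq, Set.mem_univ, iff_true]
            exact ⟨(M ω).toNat, Int.self_le_toNat _⟩
          rw [huniv, measure_univ] at h
          have := (ENNReal.tendsto_toReal ENNReal.one_ne_top).comp h
          exact this
        have hle : ∀ n : ℕ, F (n : ℤ) ≤ Φ w + c := by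
          intro n
          have := claimA (n : ℤ)
          have := hΦmono (hSb (n : ℤ))
          linarith
        have := le_of_tendsto' hlim hle
        linarith
  · -- all w < G m : event is empty
    push_neg at hS
    have hev : {ω | G (M ω) ≤ w} = (∅ : Set Ω) := by
      ext ω; simp only [Set.mem_setOf_eq, Set.mem_empty_iff_false, iff_false, not_le]
      exact hS (M ω)
    rw [hev, measure_empty, ENNReal.toReal_zero]
    have hΦwc : Φ w ≤ c := by
      have hlim : Filter.Tendsto (fun n : ℕ => Fl (-(n : ℤ))) Filter.atTop (nhds 0) := by
        have hanti : Antitone fun n : ℕ => {ω | M ω < -(n : ℤ)} := by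
          intro a b hab ω hω
          simp only [Set.mem_setOf_eq] at *
          have : (a : ℤ) ≤ (b : ℤ) := by exact_mod_cast hab
          omega
        have h := tendsto_measure_iInter_atTop (μ := P)
          (fun n => (hmlt _).nullMeasurableSet) hanti ⟨0, measure_ne_top P _⟩
        have hempty : (⋂ n : ℕ, {ω | M ω < -(n : ℤ)}) = (∅ : Set Ω) := by
          ext ω; simp only [Set.mem_iInter, Set.mem_setOf_eq, Set.mem_empty_iff_false, iff_false,
            not_forall, not_lt]
          exact ⟨(M ω).natAbs, by omega⟩
        rw [hempty, measure_empty] at h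
        have := (ENNReal.tendsto_toReal ENNReal.zero_ne_top).comp h
        exact this
      have hge : ∀ n : ℕ, Φ w ≤ Fl (-(n : ℤ)) + c := by
        intro n
        have := claimB (-(n : ℤ))
        have := hΦmono (le_of_lt (hS (-(n : ℤ))))
        linarith
      have : Φ w ≤ 0 + c := ge_of_tendsto' (hlim.add tendsto_const_nhds) hge
      linarith
    constructor
    · linarith
    · have := hΦ0 w; linarith
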